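/- Let n ≥ 2 and let g₁, g₂ : ℝⁿ → ℝ be affine functionals whose linear parts are nonzero and not proportional to each other. Define the four regions R₁ = {g₁ ≤ 0, g₂ ≤ 0}, R₂ = {g₁ ≥ 0, g₂ ≤ 0}, R₃ = {g₁ ≥ 0, g₂ ≥ 0}, R₄ = {g₁ ≤ 0, g₂ ≥ 0}. Suppose f, f′ : ℝⁿ → ℝ are continuous functions each of which is affine on each of R₁, R₂, R₃, R₄. If f = f′ on R₁ ∪ R₂ ∪ R₃, then f = f′ on all of ℝⁿ. That is, the affine piece on the fourth region is uniquely determined by the pieces on the other three (continuity restriction). -/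
import Mathlib


open Set

/-- Existence of a "dual pair" to two linearly independent vectors. -/
lemma exists_dual_pair_aux (n : ℕ) (w₁ w₂ : Fin n → ℝ)
    (hind : LinearIndependent ℝ ![w₁, w₂]) :
    ∃ u v : Fin n → ℝ,
      (∑ j, w₁ j * u j) = 1 ∧ (∑ j, w₂ j * u j) = 0 ∧
      (∑ j, w₁ j * v j) = 0 ∧ (∑ j, w₂ j * v j) = 1 := by
  have hpair := LinearIndependent.pair_iff.mp hind
  set c11 : ℝ := ∑ j, w₁ j * w₁ j with hc11
  set c12 : ℝ := ∑ j, w₁ j * w₂ j with hc12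
  set c22 : ℝ := ∑ j, w₂ j * w₂ j with hc22
  have hselfpos : ∀ w : Fin n → ℝ, w ≠ 0 → 0 < ∑ j, w j * w j := by
    intro w hw
    obtain ⟨j, hj⟩ := Function.ne_iff.mp hw
    exact Finset.sum_pos' (fun i _ => mul_self_nonneg _)
      ⟨j, Finset.mem_univ j, mul_self_pos.mpr hj⟩
  have hw2 : w₂ ≠ 0 := by
    intro h
    have := (hpair 0 1 (by simp [h])).2
    norm_num at this
  have hc22pos : 0 < c22 := hselfpos w₂ hw2
  -- z = c22 • w₁ - c12 • w₂ is nonzero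
  have hz : (fun j => c22 * w₁ j - c12 * w₂ j) ≠ 0 := by
    intro h
    have hcomb : c22 • w₁ + (-c12) • w₂ = 0 := by
      funext j
      have := congrFun h j
      simp only [Pi.zero_apply] at this
      simp only [Pi.add_apply, Pi.smul_apply, smul_eq_mul, Pi.zero_apply]
      linarith
    have := (hpair c22 (-c12) hcomb).1
    linarith
  have hzz : 0 < ∑ j, (c22 * w₁ j - c12 * w₂ j) * (c22 * w₁ j - c12 * w₂ j) :=
    hselfpos _ hz
  have hexp : (∑ j, (c22 * w₁ j - c12 * w₂ j) * (c22 * w₁ j - c12 * w₂ j))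
      = c22 * c22 * c11 - 2 * c22 * c12 * c12 + c12 * c12 * c22 := by
    rw [show (∑ j, (c22 * w₁ j - c12 * w₂ j) * (c22 * w₁ j - c12 * w₂ j))
        = ∑ j, (c22 * c22 * (w₁ j * w₁ j) - 2 * c22 * c12 * (w₁ j * w₂ j)
            + c12 * c12 * (w₂ j * w₂ j)) from
      Finset.sum_congr rfl fun j _ => by ring]
    rw [Finset.sum_add_distrib, Finset.sum_sub_distrib, ← Finset.mul_sum,
      ← Finset.mul_sum, ← Finset.mul_sum, ← hc11, ← hc12, ← hc22]
  set Δ : ℝ := c11 * c22 - c12 * c12 with hΔdef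
  have hΔpos : 0 < Δ := by nlinarith
  have hΔne : Δ ≠ 0 := ne_of_gt hΔpos
  have hsym : (∑ j, w₂ j * w₁ j) = c12 := by
    rw [hc12]; exact Finset.sum_congr rfl fun j _ => by ring
  refine ⟨fun j => Δ⁻¹ * (c22 * w₁ j - c12 * w₂ j),
          fun j => Δ⁻¹ * (c11 * w₂ j - c12 * w₁ j), ?_, ?_, ?_, ?_⟩
  · have : (∑ j, w₁ j * (Δ⁻¹ * (c22 * w₁ j - c12 * w₂ j)))
        = Δ⁻¹ * (c22 * c11 - c12 * c12) := by
      rw [hc11, hc12, Finset.mul_sum, Finset.mul_sum, ← Finset.sum_sub_distrib,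
        Finset.mul_sum]
      exact Finset.sum_congr rfl fun j _ => by ring
    rw [this]
    field_simp
    rw [hΔdef]; ring
  · have : (∑ j, w₂ j * (Δ⁻¹ * (c22 * w₁ j - c12 * w₂ j)))
        = Δ⁻¹ * (c22 * (∑ j, w₂ j * w₁ j) - c12 * c22) := by
      rw [hc22, Finset.mul_sum, Finset.mul_sum, ← Finset.sum_sub_distrib,
        Finset.mul_sum]
      exact Finset.sum_congr rfl fun j _ => by ring
    rw [this, hsym]; ring
  · have : (∑ j, w₁ j * (Δ⁻¹ * (c11 * w₂ j - c12 * w₁ j)))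
        = Δ⁻¹ * (c11 * c12 - c12 * c11) := by
      rw [hc11, hc12, Finset.mul_sum, Finset.mul_sum, ← Finset.sum_sub_distrib,
        Finset.mul_sum]
      exact Finset.sum_congr rfl fun j _ => by ring
    rw [this]; ring
  · have : (∑ j, w₂ j * (Δ⁻¹ * (c11 * w₂ j - c12 * w₁ j)))
        = Δ⁻¹ * (c11 * c22 - c12 * (∑ j, w₂ j * w₁ j)) := by
      rw [hc22, Finset.mul_sum, Finset.mul_sum, ← Finset.sum_sub_distrib,
        Finset.mul_sum]
      exact Finset.sum_congr rfl fun j _ => by ring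
    rw [this, hsym, show c11 * c22 - c12 * c12 = Δ from by rw [hΔdef],
      inv_mul_cancel₀ hΔne]

/-- Continuity restriction: for two continuous functions
that are affine on each of the four regions cut out by two intersecting
hyperplanes with non-proportional linear parts, agreement on three of the four
regions forces agreement everywhere. -/
theorem continuity_restriction_four_regions
    (n : ℕ) (hn : 2 ≤ n)
    (w₁ w₂ : Fin n → ℝ) (b₁ b₂ : ℝ)
    (hind : LinearIndependent ℝ ![w₁, w₂])
    (f f' : (Fin n → ℝ) → ℝ) (hf : Continuous f) (hf' : Continuous f')
    (hpw : ∀ F ∈ ({f, f'} : Set ((Fin n → ℝ) → ℝ)),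
      ∀ e₁ ∈ ({-1, 1} : Set ℝ), ∀ e₂ ∈ ({-1, 1} : Set ℝ),
      ∃ (a : Fin n → ℝ) (c : ℝ), ∀ x : Fin n → ℝ,
        0 ≤ e₁ * ((∑ j, w₁ j * x j) + b₁) → 0 ≤ e₂ * ((∑ j, w₂ j * x j) + b₂) →
        F x = (∑ j, a j * x j) + c)
    (hagree : ∀ x : Fin n → ℝ,
      (((∑ j, w₁ j * x j) + b₁ ≤ 0 ∧ (∑ j, w₂ j * x j) + b₂ ≤ 0) ∨
       (0 ≤ (∑ j, w₁ j * x j) + b₁ ∧ (∑ j, w₂ j * x j) + b₂ ≤ 0) ∨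
       (0 ≤ (∑ j, w₁ j * x j) + b₁ ∧ 0 ≤ (∑ j, w₂ j * x j) + b₂)) →
      f x = f' x) :
    ∀ x, f x = f' x := by
  obtain ⟨u, v, hu1, hu2, hv1, hv2⟩ := exists_dual_pair_aux n w₁ w₂ hind
  -- helper for sums of the form ∑ w j * (y j - c * z j)
  have hsum : ∀ (w y z : Fin n → ℝ) (cst : ℝ),
      (∑ j, w j * (y j - cst * z j))
        = (∑ j, w j * y j) - cst * (∑ j, w j * z j) := by
    intro w y z cst
    rw [Finset.mul_sum, ← Finset.sum_sub_distrib]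
    exact Finset.sum_congr rfl fun j _ => by ring
  intro x
  rcases le_total ((∑ j, w₁ j * x j) + b₁) 0 with h1 | h1
  · rcases le_total ((∑ j, w₂ j * x j) + b₂) 0 with h2 | h2
    · exact hagree x (Or.inl ⟨h1, h2⟩)
    · -- the fourth region: g₁ x ≤ 0, 0 ≤ g₂ x
      obtain ⟨a, c, hA⟩ := hpw f (by simp) (-1) (by simp) 1 (by simp)
      obtain ⟨a', c', hA'⟩ := hpw f' (by simp) (-1) (by simp) 1 (by simp)
      set s : ℝ := (∑ j, w₁ j * x j) + b₁ with hs
      set t : ℝ := (∑ j, w₂ j * x j) + b₂ with ht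
      set p : Fin n → ℝ := fun j => x j - s * u j with hp
      set q : Fin n → ℝ := fun j => x j - t * v j with hq
      set r : Fin n → ℝ := fun j => (x j - s * u j) - t * v j with hr
      have hg1p : (∑ j, w₁ j * p j) + b₁ = 0 := by
        rw [hp]; rw [hsum w₁ x u s, hu1]; rw [hs]; ring
      have hg2p : (∑ j, w₂ j * p j) + b₂ = t := by
        rw [hp]; rw [hsum w₂ x u s, hu2]; rw [ht]; ring
      have hg1q : (∑ j, w₁ j * q j) + b₁ = s := by
        rw [hq]; rw [hsum w₁ x v t, hv1]; rw [hs]; ring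
      have hg2q : (∑ j, w₂ j * q j) + b₂ = 0 := by
        rw [hq]; rw [hsum w₂ x v t, hv2]; rw [ht]; ring
      have hg1r : (∑ j, w₁ j * r j) + b₁ = 0 := by
        rw [hr]; rw [hsum w₁ (fun j => x j - s * u j) v t,
          hsum w₁ x u s, hu1, hv1]; rw [hs]; ring
      have hg2r : (∑ j, w₂ j * r j) + b₂ = 0 := by
        rw [hr]; rw [hsum w₂ (fun j => x j - s * u j) v t,
          hsum w₂ x u s, hu2, hv2]; rw [ht]; ring
      -- the four points lie in region R₄, so the affine formulas apply
      have hAx : f x = (∑ j, a j * x j) + c :=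
        hA x (by rw [← hs]; linarith) (by rw [← ht]; linarith)
      have hA'x : f' x = (∑ j, a' j * x j) + c' :=
        hA' x (by rw [← hs]; linarith) (by rw [← ht]; linarith)
      have hAp : f p = (∑ j, a j * p j) + c :=
        hA p (by rw [hg1p]; norm_num) (by rw [hg2p]; linarith)
      have hA'p : f' p = (∑ j, a' j * p j) + c' :=
        hA' p (by rw [hg1p]; norm_num) (by rw [hg2p]; linarith)
      have hAq : f q = (∑ j, a j * q j) + c :=
        hA q (by rw [hg1q]; linarith) (by rw [hg2q]; norm_num)
      have hA'q : f' q = (∑ j, a' j * q j) + c' :=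
        hA' q (by rw [hg1q]; linarith) (by rw [hg2q]; norm_num)
      have hAr : f r = (∑ j, a j * r j) + c :=
        hA r (by rw [hg1r]; norm_num) (by rw [hg2r]; norm_num)
      have hA'r : f' r = (∑ j, a' j * r j) + c' :=
        hA' r (by rw [hg1r]; norm_num) (by rw [hg2r]; norm_num)
      -- p, q, r lie in the union of the first three regions
      have hep : f p = f' p :=
        hagree p (Or.inr (Or.inr ⟨le_of_eq hg1p.symm, by rw [hg2p]; linarith⟩))
      have heq : f q = f' q :=
        hagree q (Or.inl ⟨by rw [hg1q]; linarith, le_of_eq hg2q⟩)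
      have her : f r = f' r :=
        hagree r (Or.inl ⟨le_of_eq hg1r, le_of_eq hg2r⟩)
      -- affine identity: x = p + q - r pointwise
      have key : ∀ d : Fin n → ℝ,
          (∑ j, d j * x j)
            = (∑ j, d j * p j) + (∑ j, d j * q j) - (∑ j, d j * r j) := by
        intro d
        rw [← Finset.sum_add_distrib, ← Finset.sum_sub_distrib]
        refine Finset.sum_congr rfl fun j _ => ?_
        rw [hp, hq, hr]; ring
      rw [hAx, hA'x, key a, key a']
      rw [hAp, hA'p] at hep
      rw [hAq, hA'q] at heq
      rw [hAr, hA'r] at her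
      linarith
  · rcases le_total ((∑ j, w₂ j * x j) + b₂) 0 with h2 | h2
    · exact hagree x (Or.inr (Or.inl ⟨h1, h2⟩))
    · exact hagree x (Or.inr (Or.inr ⟨h1, h2⟩))
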